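/- In the intersection lattice of P_{12} = CP² # 12 CP̄² (diagonal lattice ⟨1⟩ ⊕ 12⟨-1⟩ with basis H, E_1,…,E_{12}), no integral characteristic class k satisfies all of: k² ≥ 3, k² ≡ 3 (mod 8), |k·V_i| ≤ -V_i² for i = 1,…,6, and |k·V_7| ≤ 6 - V_7², where V_1 = E_{12}-E_1, V_2 = E_{11}-E_1, V_3 = E_{10}-E_1, V_4 = E_3-E_1, V_5 = E_2-E_1, V_6 = H-3E_1, V_7 = 2F + H - E_3 - E_{10} - E_{11} - E_{12} with F = 3H - E_1 - … - E_9. -/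
import Mathlib


open Finset

/-- The intersection pairing of `P₁₂ = ℂP² # 12 ℂP̄²` in the basis
`H = e₀, E₁ = e₁, …, E₁₂ = e₁₂`: diagonal form `⟨1⟩ ⊕ 12⟨-1⟩`. -/
def ipP12 (v w : Fin 13 → ℤ) : ℤ :=
  ∑ i : Fin 13, (if i = 0 then 1 else -1) * v i * w i

/-- Basis vector `eP12 j`. -/
def eP12 (j : Fin 13) : Fin 13 → ℤ := fun i => if i = j then 1 else 0

/-- The fiber class `F = 3H - E₁ - ⋯ - E₉`. -/
def FP12 : Fin 13 → ℤ :=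
  3 • eP12 0 - eP12 1 - eP12 2 - eP12 3 - eP12 4 - eP12 5 - eP12 6 - eP12 7
    - eP12 8 - eP12 9

set_option maxHeartbeats 1000000 in
/-- If `3 ≤ a0² - q`, `x² ≤ 44 q` and `|7 a0 + x| ≤ 1`, we get a contradiction:
indeed `x² = (x + 7a0)² - 14 a0 (x + 7a0) + 49 a0² ≥ 49 a0² - 14|a0|`, so
`49 a0² - 14 |a0| ≤ 44 a0² - 132`, i.e. `5 a0² - 14 |a0| + 132 ≤ 0`, which is
impossible since the discriminant `196 - 4·5·132` is negative. -/
lemma helperFinal (a0 q x : ℤ) (hQ : 3 ≤ a0^2 - q) (hCS : x^2 ≤ 44*q)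
    (h2 : |7*a0 + x| ≤ 1) : False := by
  have hr := abs_le.mp h2
  have hrsq : (7*a0 + x)^2 ≤ 1 := by nlinarith [hr.1, hr.2]
  nlinarith [hCS, hQ, hrsq, sq_nonneg (5*a0 - 7*(7*a0 + x))]

set_option maxHeartbeats 1000000 in
/-- Cauchy–Schwarz with weights `(2,2,3,2,2,2,2,2,2,1,1,1)` (sum of squares `44`),
combined with `helperFinal`. -/
lemma helperCS (a0 b1 b2 b3 b4 b5 b6 b7 b8 b9 b10 b11 b12 : ℤ)
    (hQ : 3 ≤ a0^2 - (b1^2+b2^2+b3^2+b4^2+b5^2+b6^2+b7^2+b8^2+b9^2+b10^2+b11^2+b12^2))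
    (h2 : |7*a0 + (2*b1+2*b2+3*b3+2*b4+2*b5+2*b6+2*b7+2*b8+2*b9+b10+b11+b12)| ≤ 1) :
    False := by
  refine helperFinal a0 _ _ hQ ?_ h2
  have hpos : (0:ℤ) ≤ (2*b2 - 2*b1)^2 + (2*b3 - 3*b1)^2 + (2*b4 - 2*b1)^2 + (2*b5 - 2*b1)^2 + (2*b6 - 2*b1)^2 + (2*b7 - 2*b1)^2 + (2*b8 - 2*b1)^2 + (2*b9 - 2*b1)^2 + (2*b10 - 1*b1)^2 + (2*b11 - 1*b1)^2 + (2*b12 - 1*b1)^2 + (2*b3 - 3*b2)^2 + (2*b4 - 2*b2)^2 + (2*b5 - 2*b2)^2 + (2*b6 - 2*b2)^2 + (2*b7 - 2*b2)^2 + (2*b8 - 2*b2)^2 + (2*b9 - 2*b2)^2 + (2*b10 - 1*b2)^2 + (2*b11 - 1*b2)^2 + (2*b12 - 1*b2)^2 + (3*b4 - 2*b3)^2 + (3*b5 - 2*b3)^2 + (3*b6 - 2*b3)^2 + (3*b7 - 2*b3)^2 + (3*b8 - 2*b3)^2 + (3*b9 - 2*b3)^2 + (3*b10 - 1*b3)^2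 + (3*b11 - 1*b3)^2 + (3*b12 - 1*b3)^2 + (2*b5 - 2*b4)^2 + (2*b6 - 2*b4)^2 + (2*b7 - 2*b4)^2 + (2*b8 - 2*b4)^2 + (2*b9 - 2*b4)^2 + (2*b10 - 1*b4)^2 + (2*b11 - 1*b4)^2 + (2*b12 - 1*b4)^2 + (2*b6 - 2*b5)^2 + (2*b7 - 2*b5)^2 + (2*b8 - 2*b5)^2 + (2*b9 - 2*b5)^2 + (2*b10 - 1*b5)^2 + (2*b11 - 1*b5)^2 + (2*b12 - 1*b5)^2 + (2*b7 - 2*b6)^2 + (2*b8 - 2*b6)^2 + (2*b9 - 2*b6)^2 + (2*b10 - 1*b6)^2 + (2*b11 - 1*b6)^2 + (2*b12 - 1*b6)^2 + (2*b8 - 2*b7)^2 + (2*b9 - 2*b7)^2 + (2*b10 - 1*b7)^2 + (2*b11 - 1*b7)^2 + (2*b12 - 1*b7)^2 + (2*b9 - 2*b8)^2 + (2*b10 - 1*b8)^2 + (2*b11 - 1*b8)^2 + (2*b12 - 1*b8)^2 + (2*b10 - 1*b9)^2 + (2*b11 - 1*b9)^2 + (2*b12 - 1*b9)^2 + (1*b11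 - 1*b10)^2 + (1*b12 - 1*b10)^2 + (1*b12 - 1*b11)^2 := by positivity
  have key : 44 * (b1^2+b2^2+b3^2+b4^2+b5^2+b6^2+b7^2+b8^2+b9^2+b10^2+b11^2+b12^2)
      - (2*b1+2*b2+3*b3+2*b4+2*b5+2*b6+2*b7+2*b8+2*b9+b10+b11+b12)^2 = (2*b2 - 2*b1)^2 + (2*b3 - 3*b1)^2 + (2*b4 - 2*b1)^2 + (2*b5 - 2*b1)^2 + (2*b6 - 2*b1)^2 + (2*b7 - 2*b1)^2 + (2*b8 - 2*b1)^2 + (2*b9 - 2*b1)^2 + (2*b10 - 1*b1)^2 + (2*b11 - 1*b1)^2 + (2*b12 - 1*b1)^2 + (2*b3 - 3*b2)^2 + (2*b4 - 2*b2)^2 + (2*b5 - 2*b2)^2 + (2*b6 - 2*b2)^2 + (2*b7 - 2*b2)^2 + (2*b8 - 2*b2)^2 + (2*b9 - 2*b2)^2 + (2*b10 - 1*b2)^2 + (2*b11 - 1*b2)^2 + (2*b12 - 1*b2)^2 + (3*b4 - 2*b3)^2 + (3*b5 - 2*b3)^2 + (3*b6 - 2*b3)^2 + (3*b7 - 2*b3)^2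 + (3*b8 - 2*b3)^2 + (3*b9 - 2*b3)^2 + (3*b10 - 1*b3)^2 + (3*b11 - 1*b3)^2 + (3*b12 - 1*b3)^2 + (2*b5 - 2*b4)^2 + (2*b6 - 2*b4)^2 + (2*b7 - 2*b4)^2 + (2*b8 - 2*b4)^2 + (2*b9 - 2*b4)^2 + (2*b10 - 1*b4)^2 + (2*b11 - 1*b4)^2 + (2*b12 - 1*b4)^2 + (2*b6 - 2*b5)^2 + (2*b7 - 2*b5)^2 + (2*b8 - 2*b5)^2 + (2*b9 - 2*b5)^2 + (2*b10 - 1*b5)^2 + (2*b11 - 1*b5)^2 + (2*b12 - 1*b5)^2 + (2*b7 - 2*b6)^2 + (2*b8 - 2*b6)^2 + (2*b9 - 2*b6)^2 + (2*b10 - 1*b6)^2 + (2*b11 - 1*b6)^2 + (2*b12 - 1*b6)^2 + (2*b8 - 2*b7)^2 + (2*b9 - 2*b7)^2 + (2*b10 - 1*b7)^2 + (2*b11 - 1*b7)^2 + (2*b12 - 1*b7)^2 + (2*b9 - 2*b8)^2 + (2*b10 - 1*b8)^2 + (2*b11 - 1*b8)^2 + (2*b12 - 1*b8)^2 + (2*b10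 - 1*b9)^2 + (2*b11 - 1*b9)^2 + (2*b12 - 1*b9)^2 + (1*b11 - 1*b10)^2 + (1*b12 - 1*b10)^2 + (1*b12 - 1*b11)^2 := by ring
  linarith

set_option maxHeartbeats 1000000 in
lemma ipP12_self (k : Fin 13 → ℤ) : ipP12 k k
    = k 0^2 - (k 1^2 + k 2^2 + k 3^2 + k 4^2 + k 5^2 + k 6^2 + k 7^2 + k 8^2
        + k 9^2 + k 10^2 + k 11^2 + k 12^2) := by
  simp [ipP12, Fin.sum_univ_succ, Fin.succ]; ring

set_option maxHeartbeats 1000000 in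
lemma ipP12_V7 (k : Fin 13 → ℤ) :
    ipP12 k (2 • FP12 + eP12 0 - eP12 3 - eP12 10 - eP12 11 - eP12 12)
      = 7*k 0 + (2*k 1 + 2*k 2 + 3*k 3 + 2*k 4 + 2*k 5 + 2*k 6 + 2*k 7 + 2*k 8
          + 2*k 9 + k 10 + k 11 + k 12) := by
  simp [ipP12, FP12, eP12, Fin.sum_univ_succ, Fin.succ]; ring

set_option maxHeartbeats 1000000 in
lemma ipP12_V7_V7 : ipP12 (2 • FP12 + eP12 0 - eP12 3 - eP12 10 - eP12 11 - eP12 12)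
    (2 • FP12 + eP12 0 - eP12 3 - eP12 10 - eP12 11 - eP12 12) = 5 := by
  simp [ipP12, FP12, eP12, Fin.sum_univ_succ, Fin.succ]

/-- **No basic classes for `R₆`.** In the lattice `⟨1⟩ ⊕ 12⟨-1⟩` (with basis
`H, E₁, …, E₁₂`), there is no integral characteristic class `k` with `k² ≥ 3`,
`k² ≡ 3 (mod 8)`, satisfying the adjunction constraints `|k·Vᵢ| ≤ -Vᵢ²` for
`V₁ = E₁₂-E₁, V₂ = E₁₁-E₁, V₃ = E₁₀-E₁, V₄ = E₃-E₁, V₅ = E₂-E₁, V₆ = H-3E₁`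
and `|k·V₇| ≤ 6 - V₇²` for `V₇ = 2F + H - E₃ - E₁₀ - E₁₁ - E₁₂`. -/
theorem no_basic_classes_R6 :
    ¬ ∃ k : Fin 13 → ℤ,
      (∀ x : Fin 13 → ℤ, Int.ModEq 2 (ipP12 k x) (ipP12 x x)) ∧
      3 ≤ ipP12 k k ∧ Int.ModEq 8 (ipP12 k k) 3 ∧
      (let V1 := eP12 12 - eP12 1
       let V2 := eP12 11 - eP12 1
       let V3 := eP12 10 - eP12 1
       let V4 := eP12 3 - eP12 1
       let V5 := eP12 2 - eP12 1
       let V6 := eP12 0 - 3 • eP12 1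
       let V7 := 2 • FP12 + eP12 0 - eP12 3 - eP12 10 - eP12 11 - eP12 12
       |ipP12 k V1| ≤ - ipP12 V1 V1 ∧
       |ipP12 k V2| ≤ - ipP12 V2 V2 ∧
       |ipP12 k V3| ≤ - ipP12 V3 V3 ∧
       |ipP12 k V4| ≤ - ipP12 V4 V4 ∧
       |ipP12 k V5| ≤ - ipP12 V5 V5 ∧
       |ipP12 k V6| ≤ - ipP12 V6 V6 ∧
       |ipP12 k V7| ≤ 6 - ipP12 V7 V7) := by
  rintro ⟨k, -, hsq, -, h⟩
  have h7 := h.2.2.2.2.2.2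
  rw [ipP12_V7, ipP12_V7_V7] at h7
  rw [ipP12_self] at hsq
  exact helperCS (k 0) (k 1) (k 2) (k 3) (k 4) (k 5) (k 6) (k 7) (k 8) (k 9)
    (k 10) (k 11) (k 12) hsq (by linarith [h7])
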